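/- arXiv:1106.0889 — 9 statements merged into one kernel-verified Lean document; each statement's English description precedes it below -/
import Mathlib

section
/- Let a ≥ 0, e ≥ 3, c ≥ 1 be integers, set P = (e+1)(e−a)(e²−e+a) and Q = e³ + (2a+1)e + a. If the Krein condition K₂(c) = P + Qc − ec² ≥ 0 holds, then c ≤ e² + e + 2a. -/
/-- Krein bound: for integers `a ≥ 0`, `e ≥ 3`, `c ≥ 1`, with
`P = (e+1)(e−a)(e²−e+a)` and `Q = e³ + (2a+1)e + a`, if
`K₂(c) = P + Q·c − e·c² ≥ 0` then `c ≤ e² + e + 2a`. -/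
theorem krein_bound_e_ge_three (a e c : ℤ) (ha : 0 ≤ a) (he : 3 ≤ e) (hc : 1 ≤ c)
    (hK : 0 ≤ (e + 1) * (e - a) * (e ^ 2 - e + a) + (e ^ 3 + (2 * a + 1) * e + a) * c - e * c ^ 2) :
    c ≤ e ^ 2 + e + 2 * a := by
  by_contra h
  push_neg at h
  have h1 : e ^ 2 + e + 2 * a + 1 ≤ c := h
  nlinarith [mul_nonneg ha ha, mul_nonneg (mul_nonneg ha ha) ha, sq_nonneg (c - e^2 - e - 2*a - 1), mul_le_mul_of_nonneg_left h1 (by linarith : (0:ℤ) ≤ e), mul_le_mul_of_nonneg_left h1 (by linarith : (0:ℤ) ≤ a), mul_pos (by linarith : (0:ℤ) < e) (by linarith : (0:ℤ) < c), sq_nonneg (e - a), mul_nonneg ha (by linarith : (0:ℤ) ≤ e)]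
end

section
/- Let a ≥ 0, c ≥ 1 be integers and let e = 1 or e = 2, set P = (e+1)(e−a)(e²−e+a) and Q = e³ + (2a+1)e + a. If the Krein condition K₂(c) = P + Qc − ec² ≥ 0 holds, then c ≤ e² + e + 3a. -/
/-- Krein bound for `e = 1` or `e = 2`: for integers `a ≥ 0`, `c ≥ 1`, with
`P = (e+1)(e−a)(e²−e+a)` and `Q = e³ + (2a+1)e + a`, if
`K₂(c) = P + Q·c − e·c² ≥ 0` then `c ≤ e² + e + 3a`. -/
theorem krein_bound_e_one_two (a e c : ℤ) (ha : 0 ≤ a) (he : e = 1 ∨ e = 2) (hc : 1 ≤ c)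
    (hK : 0 ≤ (e + 1) * (e - a) * (e ^ 2 - e + a) + (e ^ 3 + (2 * a + 1) * e + a) * c - e * c ^ 2) :
    c ≤ e ^ 2 + e + 3 * a := by
  by_contra h
  push_neg at h
  rcases he with rfl | rfl <;>
    nlinarith [sq_nonneg a, sq_nonneg c, mul_le_mul_of_nonneg_left h.le (by linarith : (0:ℤ) ≤ c)]
end

section
/- Let e ≥ 1 and c ≥ 1 be integers and take a = 0, so that P = e²(e+1)(e−1) and Q = e³ + e. If the Krein condition K₂(c) = P + Qc − ec² ≥ 0 holds, then c ≤ e(e+1). -/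
/-- Krein bound in the triangle-free case `a = 0`: for integers `e ≥ 1`, `c ≥ 1`, with
`P = e²(e+1)(e−1)` and `Q = e³ + e`, if `K₂(c) = P + Q·c − e·c² ≥ 0` then `c ≤ e(e+1)`. -/
theorem krein_bound_triangle_free (e c : ℤ) (he : 1 ≤ e) (hc : 1 ≤ c)
    (hK : 0 ≤ e ^ 2 * (e + 1) * (e - 1) + (e ^ 3 + e) * c - e * c ^ 2) :
    c ≤ e * (e + 1) := by
  nlinarith [mul_pos (lt_of_lt_of_le zero_lt_one he) (show (0:ℤ) < c + e - 1 by linarith),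
    sq_nonneg (c - e * e - e), mul_le_mul_of_nonneg_left hK (show (0:ℤ) ≤ 1 by norm_num)]
end

section
/- Let A be a real symmetric n×n matrix, let e ∈ ℝ, and let m = n − rank(eI − A) be the multiplicity of e as an eigenvalue of A. Let Q be a set of n − m indices such that eI − A_Q is invertible, where A_Q is the principal submatrix of A on Q; let P be the complementary set of indices, A_P the principal submatrix of A on P, and B the Q×P block of A (so B_{qp} = A_{qp} for q ∈ Q, p ∈ P). Then eI − A_P = Bᵀ (eI − A_Q)⁻¹ B. -/
open Matrix

lemma schur_zero {l m : Type*} [Fintype l] [Fintype m] [DecidableEq l] [DecidableEq m]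
    (D : Matrix l l ℝ) (S : Matrix m m ℝ) [Invertible D]
    (h : (fromBlocks D 0 0 S).rank = Fintype.card l) : S = 0 := by
  set N := fromBlocks D 0 0 S with hN
  have hker : ∀ f : (l ⊕ m → ℝ), N.mulVecLin f = 0 ↔
      (f ∘ Sum.inl = 0 ∧ S.mulVecLin (f ∘ Sum.inr) = 0) := by
    intro f
    rw [mulVecLin_apply, hN, fromBlocks_mulVec]
    constructor
    · intro hf
      have h1 : D *ᵥ (f ∘ Sum.inl) + (0:Matrix l m ℝ) *ᵥ (f ∘ Sum.inr) = 0 := by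
        funext i; exact congrFun hf (Sum.inl i)
      have h2 : (0:Matrix m l ℝ) *ᵥ (f ∘ Sum.inl) + S *ᵥ (f ∘ Sum.inr) = 0 := by
        funext i; exact congrFun hf (Sum.inr i)
      simp only [Matrix.zero_mulVec, add_zero, zero_add] at h1 h2
      refine ⟨?_, by simpa [mulVecLin_apply] using h2⟩
      have := congrArg (fun v => D⁻¹ *ᵥ v) h1
      simpa [Matrix.mulVec_mulVec, Matrix.nonsing_inv_mul D (isUnit_det_of_invertible D),
        Matrix.mulVec_zero, Matrix.one_mulVec] using this
    · rintro ⟨h1, h2⟩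
      rw [mulVecLin_apply] at h2
      funext i
      cases i <;> simp [h1, h2, Matrix.mulVec_zero]
  -- linear equiv between ker N and ker S
  let φ : LinearMap.ker N.mulVecLin ≃ₗ[ℝ] LinearMap.ker S.mulVecLin :=
    { toFun := fun f => ⟨(f : l ⊕ m → ℝ) ∘ Sum.inr, ((hker f).1 f.2).2⟩
      map_add' := fun f g => rfl
      map_smul' := fun c f => rfl
      invFun := fun y => ⟨Sum.elim 0 (y : m → ℝ), by
        refine (hker _).2 ⟨rfl, ?_⟩
        simpa using y.2⟩
      left_inv := fun f => by
        ext i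
        cases i with
        | inl i => exact (congrFun ((hker f).1 f.2).1 i).symm
        | inr i => rfl
      right_inv := fun y => rfl }
  have hkerN : Module.finrank ℝ (LinearMap.ker N.mulVecLin) = Fintype.card m := by
    have := LinearMap.finrank_range_add_finrank_ker N.mulVecLin
    rw [← Matrix.rank, h, Module.finrank_pi, Fintype.card_sum] at this
    omega
  have hkerS : Module.finrank ℝ (LinearMap.ker S.mulVecLin) = Fintype.card m := by
    rw [← hkerN]; exact (LinearEquiv.finrank_eq φ).symm
  have htop : LinearMap.ker S.mulVecLin = ⊤ :=
    Submodule.eq_top_of_finrank_eq (by rw [hkerS, Module.finrank_pi])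
  ext i j
  have : S.mulVecLin (Pi.single j 1) = 0 := by
    have : (Pi.single j 1 : m → ℝ) ∈ LinearMap.ker S.mulVecLin := by rw [htop]; trivial
    exact this
  simpa [Matrix.mulVecLin_apply, Matrix.mulVec_single] using congrFun this i

open Matrix in
/-- The Reconstruction Theorem of star complement theory: let `A` be a real symmetric
`n × n` matrix, `e ∈ ℝ`, and `m = n − rank(e•I − A)` the multiplicity of `e` as an
eigenvalue of `A`. If `Q` is a set of `n − m` indices such that `e•I − A_Q` is invertible
(where `A_Q` is the principal submatrix of `A` on `Q`), `P = Qᶜ`, `A_P` the principal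
submatrix on `P`, and `B` the `Q × P` block of `A`, then
`e•I − A_P = Bᵀ (e•I − A_Q)⁻¹ B`. -/
theorem star_complement_reconstruction (n : ℕ) (A : Matrix (Fin n) (Fin n) ℝ)
    (hA : A.IsSymm) (e : ℝ) (m : ℕ)
    (hm : m = n - (e • (1 : Matrix (Fin n) (Fin n) ℝ) - A).rank)
    (Q : Finset (Fin n)) (hQcard : Q.card = n - m)
    (hQinv : IsUnit (e • (1 : Matrix ↥Q ↥Q ℝ)
      - A.submatrix (Subtype.val : ↥Q → Fin n) (Subtype.val : ↥Q → Fin n))) :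
    e • (1 : Matrix ↥(Qᶜ) ↥(Qᶜ) ℝ)
      - A.submatrix (Subtype.val : ↥(Qᶜ) → Fin n) (Subtype.val : ↥(Qᶜ) → Fin n)
    = (A.submatrix (Subtype.val : ↥Q → Fin n) (Subtype.val : ↥(Qᶜ) → Fin n))ᵀ
      * (e • (1 : Matrix ↥Q ↥Q ℝ)
          - A.submatrix (Subtype.val : ↥Q → Fin n) (Subtype.val : ↥Q → Fin n))⁻¹
      * A.submatrix (Subtype.val : ↥Q → Fin n) (Subtype.val : ↥(Qᶜ) → Fin n) := by
  classical
  set M : Matrix (Fin n) (Fin n) ℝ := e • (1 : Matrix (Fin n) (Fin n) ℝ) - A with hMdef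
  let σ : (↥Q ⊕ ↥(Qᶜ)) ≃ Fin n :=
    ((Equiv.refl ↥Q).sumCongr (Equiv.subtypeEquivRight (fun x => Finset.mem_compl))).trans
      (Equiv.sumCompl (· ∈ Q))
  have hσl : ∀ q : ↥Q, σ (Sum.inl q) = q.1 := fun q => rfl
  have hσr : ∀ p : ↥(Qᶜ), σ (Sum.inr p) = p.1 := fun p => rfl
  set D := M.submatrix (Subtype.val : ↥Q → Fin n) (Subtype.val : ↥Q → Fin n) with hDdef
  set Bm := M.submatrix (Subtype.val : ↥Q → Fin n) (Subtype.val : ↥(Qᶜ) → Fin n) with hBdef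
  set Cm := M.submatrix (Subtype.val : ↥(Qᶜ) → Fin n) (Subtype.val : ↥Q → Fin n) with hCdef
  set Em := M.submatrix (Subtype.val : ↥(Qᶜ) → Fin n) (Subtype.val : ↥(Qᶜ) → Fin n) with hEdef
  have hblocks : M.submatrix σ σ = fromBlocks D Bm Cm Em := by
    ext i j
    cases i <;> cases j <;> rfl
  -- D equals statement's matrix
  have hone : ∀ (T : Finset (Fin n)), (1 : Matrix (Fin n) (Fin n) ℝ).submatrix
      (Subtype.val : ↥T → Fin n) (Subtype.val : ↥T → Fin n) = 1 := by
    intro T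
    ext i j
    simp [Matrix.one_apply]
  have hD : D = e • (1 : Matrix ↥Q ↥Q ℝ)
      - A.submatrix (Subtype.val : ↥Q → Fin n) (Subtype.val : ↥Q → Fin n) := by
    rw [hDdef, hMdef]
    ext i j
    simp [Matrix.one_apply]
  have hDunit : IsUnit D := hD ▸ hQinv
  haveI : Invertible D := hDunit.invertible
  -- rank of M
  have hrank : M.rank = Q.card := by
    have h1 : M.rank ≤ n := by simpa using M.rank_le_card_width
    omega
  -- Schur complement is zero
  have hfac := fromBlocks_eq_of_invertible₁₁ D Bm Cm Em
  have hrS : (fromBlocks D 0 0 (Em - Cm * ⅟D * Bm)).rank = Fintype.card ↥Q := by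
    have hr2 : (fromBlocks D Bm Cm Em).rank = M.rank := by
      rw [← hblocks, rank_submatrix]
    rw [hfac] at hr2
    rw [rank_mul_eq_left_of_isUnit_det _ _ (by
        rw [det_fromBlocks_zero₂₁]; simp),
      rank_mul_eq_right_of_isUnit_det _ _ (by
        rw [det_fromBlocks_zero₁₂]; simp)] at hr2
    rw [hr2, hrank, Fintype.card_coe]
  have hS0 : Em - Cm * ⅟D * Bm = 0 := schur_zero D _ hrS
  have hEm : Em = Cm * ⅟D * Bm := by rwa [sub_eq_zero] at hS0
  -- identify blocks
  have hMsymm : M.IsSymm := by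
    rw [hMdef, Matrix.IsSymm]
    rw [Matrix.transpose_sub, Matrix.transpose_smul, Matrix.transpose_one, hA]
  have hCm : Cm = Bmᵀ := by
    ext i j
    exact congrFun (congrFun hMsymm j.1) i.1
  have hBm : Bm = -(A.submatrix (Subtype.val : ↥Q → Fin n) (Subtype.val : ↥(Qᶜ) → Fin n)) := by
    rw [hBdef, hMdef]
    ext i j
    have : (i : Fin n) ≠ (j : Fin n) := by
      intro h
      exact (Finset.mem_compl.mp j.2) (h ▸ i.2)
    simp [Matrix.one_apply_ne this]
  have hE : Em = e • (1 : Matrix ↥(Qᶜ) ↥(Qᶜ) ℝ)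
      - A.submatrix (Subtype.val : ↥(Qᶜ) → Fin n) (Subtype.val : ↥(Qᶜ) → Fin n) := by
    rw [hEdef, hMdef]
    ext i j
    simp [Matrix.one_apply]
  have hinv : ⅟D = D⁻¹ := invOf_eq_nonsing_inv D
  rw [← hE, hEm, hCm, hBm, hinv, hD]
  simp [Matrix.transpose_neg, Matrix.neg_mul, Matrix.mul_neg]
end

section
/- Let X be a strongly regular graph with parameters (n, k, a, c), where 3 ≤ k and 1 ≤ c < k, and let e ≥ 1 be an integer with c = e(e+1) and k = (e+1)c + e(e−a) (as integers). Then the eigenspace of the real adjacency matrix of X for the eigenvalue e has dimension n − k − 1. -/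
open Module SimpleGraph

set_option maxHeartbeats 1000000 in
/-- For a strongly regular graph `X` with parameters `(n, k, a, c)`, `3 ≤ k`, `1 ≤ c < k`,
and positive eigenvalue `e ≥ 1` with `c = e(e+1)` and `k = (e+1)c + e(e−a)`, the eigenspace
of the real adjacency matrix of `X` for the eigenvalue `e` has dimension `n − k − 1`. -/
theorem srg_eigenspace_dim {V : Type*} [Fintype V] [DecidableEq V]
    (X : SimpleGraph V) [DecidableRel X.Adj]
    (n k a c : ℕ) (e : ℤ) (hX : X.IsSRGWith n k a c) (hk : 3 ≤ k) (hc : 1 ≤ c) (hck : c < k)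
    (he : 1 ≤ e) (hce : (c : ℤ) = e * (e + 1))
    (hke : (k : ℤ) = (e + 1) * (c : ℤ) + e * (e - (a : ℤ))) :
    Module.finrank ℝ
        (Module.End.eigenspace (Matrix.toLin' (X.adjMatrix ℝ)) (e : ℝ))
      = n - k - 1 := by
  classical
  cases isEmpty_or_nonempty V with
  | inl hV =>
    have hn0 : n = 0 := by rw [← hX.card]; exact Fintype.card_eq_zero
    have h0 : Module.finrank ℝ (V → ℝ) = 0 := by
      rw [Module.finrank_fintype_fun_eq_card]; exact Fintype.card_eq_zero
    have hle := Submodule.finrank_le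
      (Module.End.eigenspace (Matrix.toLin' (X.adjMatrix ℝ)) (e : ℝ))
    omega
  | inr hV =>
  obtain ⟨v0⟩ := hV
  have hreg := hX.regular
  have hdeg : X.degree v0 = k := hreg v0
  have hnbr : (X.neighborFinset v0).Nonempty := by
    rw [← Finset.card_pos, card_neighborFinset_eq_degree, hdeg]; omega
  obtain ⟨w0, hw0⟩ := hnbr
  rw [mem_neighborFinset] at hw0
  have hak : a + 1 ≤ k := by
    have hcard : Fintype.card (X.commonNeighbors v0 w0) = a := hX.of_adj v0 w0 hw0
    have hsub : (X.commonNeighbors v0 w0).toFinset ⊆ (X.neighborFinset v0).erase w0 := by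
      intro x hx
      rw [Set.mem_toFinset, mem_commonNeighbors] at hx
      refine Finset.mem_erase.2 ⟨?_, by rw [mem_neighborFinset]; exact hx.1⟩
      rintro rfl
      exact X.loopless.irrefl _ hx.2
    have hle := Finset.card_le_card hsub
    rw [Set.toFinset_card, hcard,
      Finset.card_erase_of_mem (by rw [mem_neighborFinset]; exact hw0),
      card_neighborFinset_eq_degree, hdeg] at hle
    omega
  have hkn : k + 1 ≤ n := by
    have hcard := Finset.card_le_card (Finset.subset_univ (insert v0 (X.neighborFinset v0)))
    rw [Finset.card_insert_of_notMem (X.notMem_neighborFinset_self v0),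
      card_neighborFinset_eq_degree, hdeg, Finset.card_univ, hX.card] at hcard
    omega
  have hn0 : 0 < n := by omega
  have hparam := SimpleGraph.IsSRGWith.param_eq X hX hn0
  -- real parameters
  set A := X.adjMatrix ℝ with hA
  set T := Matrix.toLin' A with hT
  set ee := (e : ℝ) with hee
  set aa := (a : ℝ) with haa
  set nn := (n : ℝ) with hnn
  set kk := (k : ℝ) with hkk
  set cc := (c : ℝ) with hcc
  set ff := aa - cc - ee with hff
  have hkZ : (k : ℤ) = e ^ 3 + 3 * e ^ 2 + e - e * a := by rw [hke, hce]; ring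
  have hkR : kk = ee ^ 3 + 3 * ee ^ 2 + ee - ee * aa := by
    rw [hkk, hee, haa]; exact_mod_cast congrArg (fun z : ℤ => (z : ℝ)) hkZ
  have hcR : cc = ee ^ 2 + ee := by
    rw [hcc, hee]
    have : (c : ℤ) = e ^ 2 + e := by rw [hce]; ring
    exact_mod_cast congrArg (fun z : ℤ => (z : ℝ)) this
  have hnR : kk * (kk - aa - 1) = (nn - kk - 1) * cc := by
    zify [show a ≤ k by omega, show 1 ≤ k - a by omega, show k ≤ n by omega,
      show 1 ≤ n - k by omega] at hparam
    rw [hkk, haa, hnn, hcc]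
    exact_mod_cast congrArg (fun z : ℤ => (z : ℝ)) hparam
  have he1R : (1 : ℝ) ≤ ee := by rw [hee]; exact_mod_cast he
  have hc1R : (1 : ℝ) ≤ cc := by rw [hcc]; exact_mod_cast hc
  have hckZ : (c : ℤ) < (k : ℤ) := by exact_mod_cast hck
  have heK : ee < kk := by
    rw [hee, hkk]
    have : e < (k : ℤ) := by nlinarith
    exact_mod_cast this
  have hEmF : ee * (ee - ff) = kk - ee := by rw [hff]; linear_combination ee * hcR - hkR
  have hEF : ee ≠ ff := by
    intro h
    rw [← h, sub_self, mul_zero] at hEmF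
    linarith
  have hKF : kk ≠ ff := by
    intro h
    rw [← h] at hEmF
    nlinarith [mul_pos (sub_pos.2 heK) (show (0:ℝ) < 1 + ee by linarith)]
  -- matrix identities
  set J : Matrix V V ℝ := Matrix.of (fun _ _ => (1 : ℝ)) with hJ
  have hcompl : (Xᶜ.adjMatrix ℝ) = J - 1 - A := by
    ext v w
    by_cases hvw : v = w
    · subst hvw
      simp [hJ, Matrix.one_apply, hA]
    · by_cases hadj : X.Adj v w
      · simp [hJ, Matrix.one_apply, hA, hvw, hadj, compl_adj]
      · simp [hJ, Matrix.one_apply, hA, hvw, hadj, compl_adj]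
  have hsq : A * A = kk • (1 : Matrix V V ℝ) + aa • A + cc • (J - 1 - A) := by
    have h := hX.matrix_eq (α := ℝ)
    rw [pow_two, hcompl] at h
    rw [h, hkk, haa, hcc]
    rw [Nat.cast_smul_eq_nsmul, Nat.cast_smul_eq_nsmul, Nat.cast_smul_eq_nsmul]
  have hAJ : A * J = kk • J := by
    ext v w
    rw [adjMatrix_mul_apply]
    have hJ1 : ∀ u ∈ X.neighborFinset v, J u w = (1 : ℝ) := fun _ _ => rfl
    rw [Finset.sum_congr rfl hJ1, Finset.sum_const, card_neighborFinset_eq_degree, hreg v]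
    simp [hJ, hkk, Matrix.smul_apply]
  have hexp : (A - ee • 1) * (A - ff • 1)
      = A * A - (ee + ff) • A + (ee * ff) • (1 : Matrix V V ℝ) := by
    rw [sub_mul, mul_sub, mul_sub]
    simp only [smul_mul_assoc, mul_smul_comm, one_mul, mul_one, smul_smul]
    module
  have h2 : (A - ee • 1) * (A - ff • 1) = cc • J := by
    rw [hexp, hsq]
    match_scalars
    · rw [hff]; linear_combination hkR - (ee + 1) * hcR
    · rw [hff]; ring
    · ring
  have hMzero : (A - kk • 1) * ((A - ee • 1) * (A - ff • 1)) = 0 := by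
    rw [h2, mul_smul_comm, sub_mul, smul_mul_assoc, one_mul, hAJ, sub_self, smul_zero]
  have htoLin : ∀ (M : Matrix V V ℝ) (μ : ℝ),
      Matrix.toLin' M - μ • (1 : (V → ℝ) →ₗ[ℝ] V → ℝ) = Matrix.toLin' (M - μ • 1) := by
    intro M μ
    rw [map_sub, map_smul, Matrix.toLin'_one]
    rfl
  have hEnd : (T - kk • 1) * ((T - ee • 1) * (T - ff • 1)) = 0 := by
    rw [hT, htoLin, htoLin, htoLin]
    simp only [Module.End.mul_eq_comp, ← Matrix.toLin'_mul]
    rw [hMzero, map_zero]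
  have hker_eq : ∀ μ : ℝ,
      Module.End.eigenspace T μ = LinearMap.ker (Polynomial.aeval T (Polynomial.X - Polynomial.C μ : Polynomial ℝ)) := by
    intro μ
    rw [Module.End.eigenspace_def]
    congr 1
    rw [map_sub, Polynomial.aeval_X, Polynomial.aeval_C, Algebra.algebraMap_eq_smul_one]
  have hpz : Polynomial.aeval T ((Polynomial.X - Polynomial.C kk) * ((Polynomial.X - Polynomial.C ee) * (Polynomial.X - Polynomial.C ff)) : Polynomial ℝ) = 0 := by
    rw [map_mul, map_mul, map_sub, map_sub, map_sub, Polynomial.aeval_X, Polynomial.aeval_C, Polynomial.aeval_C, Polynomial.aeval_C,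
      Algebra.algebraMap_eq_smul_one, Algebra.algebraMap_eq_smul_one,
      Algebra.algebraMap_eq_smul_one]
    exact hEnd
  have cop1 : IsCoprime (Polynomial.X - Polynomial.C ee : Polynomial ℝ) (Polynomial.X - Polynomial.C ff) :=
    Polynomial.isCoprime_X_sub_C_of_isUnit_sub (IsUnit.mk0 _ (sub_ne_zero.2 hEF))
  have cop2 : IsCoprime (Polynomial.X - Polynomial.C kk : Polynomial ℝ) ((Polynomial.X - Polynomial.C ee) * (Polynomial.X - Polynomial.C ff)) :=
    IsCoprime.mul_right
      (Polynomial.isCoprime_X_sub_C_of_isUnit_sub (IsUnit.mk0 _ (sub_ne_zero.2 (ne_of_gt heK))))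
      (Polynomial.isCoprime_X_sub_C_of_isUnit_sub (IsUnit.mk0 _ (sub_ne_zero.2 hKF)))
  have hsup : Module.End.eigenspace T kk
      ⊔ (Module.End.eigenspace T ee ⊔ Module.End.eigenspace T ff) = ⊤ := by
    rw [hker_eq, hker_eq, hker_eq,
      Polynomial.sup_ker_aeval_eq_ker_aeval_mul_of_coprime T cop1,
      Polynomial.sup_ker_aeval_eq_ker_aeval_mul_of_coprime T cop2,
      hpz, LinearMap.ker_zero]
  set μv : Fin 3 → ℝ := ![kk, ee, ff] with hμv
  set N : Fin 3 → Submodule ℝ (V → ℝ) := fun i => Module.End.eigenspace T (μv i) with hN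
  have hμ0 : μv 0 = kk := rfl
  have hN0 : N 0 = Module.End.eigenspace T kk := by simp only [hN]; rw [hμ0]
  have hμ1 : μv 1 = ee := rfl
  have hN1 : N 1 = Module.End.eigenspace T ee := by simp only [hN]; rw [hμ1]
  have hμ2 : μv 2 = ff := rfl
  have hN2 : N 2 = Module.End.eigenspace T ff := by simp only [hN]; rw [hμ2]
  have hμinj : Function.Injective μv := by
    intro i j hij
    fin_cases i <;> fin_cases j <;>
      simp only [hμv, Matrix.cons_val_zero, Matrix.cons_val_one, Matrix.head_cons,
        Matrix.cons_val_two, Matrix.tail_cons] at hij <;>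
      first
        | rfl
        | exact absurd hij (ne_of_gt heK)
        | exact absurd hij (ne_of_gt heK).symm
        | exact absurd hij hKF
        | exact absurd hij.symm hKF
        | exact absurd hij hEF
        | exact absurd hij.symm hEF
  have hind : iSupIndep N := (Module.End.eigenspaces_iSupIndep T).comp hμinj
  have hiSupN : ⨆ i, N i = ⊤ := by
    refine top_unique ?_
    rw [← hsup]
    refine sup_le ?_ (sup_le ?_ ?_)
    · exact le_of_eq_of_le hN0.symm (le_iSup N 0)
    · exact le_of_eq_of_le hN1.symm (le_iSup N 1)
    · exact le_of_eq_of_le hN2.symm (le_iSup N 2)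
  have internal : DirectSum.IsInternal N :=
    DirectSum.isInternal_submodule_of_iSupIndep_of_iSup_eq_top hind hiSupN
  have hmaps : ∀ i, Set.MapsTo T (N i) (N i) := by
    intro i x hx
    simp only [SetLike.mem_coe] at hx ⊢
    have hx' : T x = μv i • x := Module.End.mem_eigenspace_iff.mp hx
    rw [hx']
    exact Submodule.smul_mem _ _ hx
  set T2 := Matrix.toLin' (A * A) with hT2
  have hT2c : ∀ x, T2 x = T (T x) := by
    intro x
    rw [hT2, Matrix.toLin'_mul, hT]
    rfl
  have hmaps2 : ∀ i, Set.MapsTo T2 (N i) (N i) := by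
    intro i x hx
    simp only [SetLike.mem_coe] at hx ⊢
    have hx' : T x = μv i • x := Module.End.mem_eigenspace_iff.mp hx
    rw [hT2c, hx', map_smul, hx']
    exact Submodule.smul_mem _ _ (Submodule.smul_mem _ _ hx)
  have hres : ∀ i, T.restrict (hmaps i) = (μv i) • LinearMap.id := by
    intro i
    refine LinearMap.ext fun x => Subtype.ext ?_
    change T (x : V → ℝ) = _
    simp only [LinearMap.smul_apply, LinearMap.id_coe, id_eq, SetLike.val_smul]
    exact Module.End.mem_eigenspace_iff.mp x.2
  have hres2 : ∀ i, T2.restrict (hmaps2 i) = (μv i ^ 2) • LinearMap.id := by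
    intro i
    refine LinearMap.ext fun x => Subtype.ext ?_
    change T2 (x : V → ℝ) = _
    simp only [LinearMap.smul_apply, LinearMap.id_coe, id_eq, SetLike.val_smul]
    rw [hT2c, Module.End.mem_eigenspace_iff.mp x.2, map_smul,
      Module.End.mem_eigenspace_iff.mp x.2, smul_smul, pow_two]
  -- trace identities
  have htr_restrict : ∀ (i : Fin 3),
      LinearMap.trace ℝ (N i) (T.restrict (hmaps i)) = μv i * (finrank ℝ (N i) : ℝ) := by
    intro i
    rw [hres i, map_smul, LinearMap.trace_id, smul_eq_mul]
  have htr_restrict2 : ∀ (i : Fin 3),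
      LinearMap.trace ℝ (N i) (T2.restrict (hmaps2 i)) = μv i ^ 2 * (finrank ℝ (N i) : ℝ) := by
    intro i
    rw [hres2 i, map_smul, LinearMap.trace_id, smul_eq_mul]
  have hfrk : finrank ℝ (V → ℝ) = n := by
    rw [Module.finrank_fintype_fun_eq_card, hX.card]
  have hE1 : (finrank ℝ (N 0) : ℝ) + (finrank ℝ (N 1) : ℝ) + (finrank ℝ (N 2) : ℝ) = nn := by
    have hmid : ∀ i : Fin 3, Set.MapsTo (LinearMap.id : (V → ℝ) →ₗ[ℝ] V → ℝ) (N i) (N i) :=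
      fun _ x hx => hx
    have h := LinearMap.trace_eq_sum_trace_restrict internal
      (f := (LinearMap.id : (V → ℝ) →ₗ[ℝ] V → ℝ)) hmid
    have hid : ∀ i : Fin 3, (LinearMap.id.restrict (hmid i))
        = (LinearMap.id : N i →ₗ[ℝ] N i) := fun i => rfl
    rw [LinearMap.trace_id, hfrk, Fin.sum_univ_three] at h
    rw [hid 0, hid 1, hid 2, LinearMap.trace_id, LinearMap.trace_id, LinearMap.trace_id] at h
    rw [hnn]
    exact_mod_cast h.symm
  have htrT : LinearMap.trace ℝ (V → ℝ) T = 0 := by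
    rw [hT, LinearMap.trace_eq_matrix_trace ℝ (Pi.basisFun ℝ V),
      LinearMap.toMatrix_eq_toMatrix', LinearMap.toMatrix'_toLin', hA, trace_adjMatrix]
  have hE2 : kk * (finrank ℝ (N 0) : ℝ) + ee * (finrank ℝ (N 1) : ℝ)
      + ff * (finrank ℝ (N 2) : ℝ) = 0 := by
    have h := LinearMap.trace_eq_sum_trace_restrict internal hmaps
    rw [htrT, Fin.sum_univ_three, htr_restrict 0, htr_restrict 1, htr_restrict 2,
      hμ0, hμ1, hμ2] at h
    linarith [h]
  have htrT2 : LinearMap.trace ℝ (V → ℝ) T2 = nn * kk := by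
    rw [hT2, LinearMap.trace_eq_matrix_trace ℝ (Pi.basisFun ℝ V),
      LinearMap.toMatrix_eq_toMatrix', LinearMap.toMatrix'_toLin']
    rw [hA]
    unfold Matrix.trace
    simp only [Matrix.diag_apply, SimpleGraph.adjMatrix_mul_self_apply_self]
    rw [Finset.sum_congr rfl (fun v _ => by rw [hreg v])]
    rw [Finset.sum_const, Finset.card_univ, hX.card, nsmul_eq_mul, hnn, hkk]
  have hE3 : kk ^ 2 * (finrank ℝ (N 0) : ℝ) + ee ^ 2 * (finrank ℝ (N 1) : ℝ)
      + ff ^ 2 * (finrank ℝ (N 2) : ℝ) = nn * kk := by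
    have h := LinearMap.trace_eq_sum_trace_restrict internal hmaps2
    rw [htrT2, Fin.sum_univ_three, htr_restrict2 0, htr_restrict2 1, htr_restrict2 2,
      hμ0, hμ1, hμ2] at h
    linarith [h]
  -- solve for the multiplicity
  have hq : (ee - kk) * (ee - ff) * (finrank ℝ (N 1) : ℝ) = nn * kk * (1 + ff) := by
    linear_combination hE3 - (kk + ff) * hE2 + (kk * ff) * hE1
  have hq2 : (ee - kk) * (ee - ff) * (nn - kk - 1) = nn * kk * (1 + ff) := by
    have hmul : ((ee - kk) * (ee - ff) * (nn - kk - 1)) * (ee ^ 2 * cc)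
        = (nn * kk * (1 + ff)) * (ee ^ 2 * cc) := by
      rw [hff]
      linear_combination (ee^3*(ee^3+3*ee^2+ee-ee*aa+1)) * hnR + (ee^2*cc^2 + ee^2*kk*cc^2 - ee^2*nn*cc - ee^2*aa*cc - ee^2*aa*kk*cc + ee^3 + ee^3*cc - ee^3*kk + 2*ee^3*kk*cc - ee^3*nn*cc + ee^3*aa - ee^3*aa*cc^2 + ee^3*aa^2*cc - ee^4*cc + 3*ee^4*cc^2 - ee^4*kk + ee^4*aa - 4*ee^4*aa*cc + ee^4*aa*kk - ee^4*aa^2 - ee^5 + 3*ee^5*cc + ee^5*cc^2 - 3*ee^5*kk + 5*ee^5*aa - ee^5*aa*cc - ee^5*aa^2 - 6*ee^6 + ee^6*cc - ee^6*kk + 7*ee^6*aa - 11*ee^7 + 2*ee^7*aa - 6*ee^8 - ee^9) * hkR + (-ee^3 + ee^3*nn*cc - ee^3*aa*cc + ee^3*aa^2 - 2*ee^4 + 3*ee^4*cc - 4*ee^4*aa - ee^4*aa*cc + ee^4*aa^2 + ee^4*aa^2*cc - ee^4*aa^3 + 2*ee^5 + 4*ee^5*cc - 6*ee^5*aa - 6*ee^5*aa*cc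 + 8*ee^5*aa^2 + 7*ee^6 + 10*ee^6*cc - 23*ee^6*aa - 2*ee^6*aa*cc + 3*ee^6*aa^2 + 23*ee^7 + 6*ee^7*cc - 16*ee^7*aa + 22*ee^8 + ee^8*cc - 3*ee^8*aa + 8*ee^9 + ee^10) * hcR
    have hnz : ee ^ 2 * cc ≠ 0 := by positivity
    exact mul_right_cancel₀ hnz hmul
  have hkey : (finrank ℝ (N 1) : ℝ) = nn - kk - 1 := by
    have hnz : (ee - kk) * (ee - ff) ≠ 0 :=
      mul_ne_zero (sub_ne_zero.2 (ne_of_lt heK)) (sub_ne_zero.2 hEF)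
    exact mul_left_cancel₀ hnz (hq.trans hq2.symm)
  have hgoal : Module.End.eigenspace T ee = N 1 := hN1.symm
  rw [hgoal]
  have hcast : ((n - k - 1 : ℕ) : ℝ) = nn - kk - 1 := by
    rw [Nat.sub_sub, Nat.cast_sub (by omega : k + 1 ≤ n), hnn, hkk]
    push_cast
    ring
  have : (finrank ℝ (N 1) : ℝ) = ((n - k - 1 : ℕ) : ℝ) := by rw [hcast]; exact hkey
  exact_mod_cast this
end

section
/- Let X be a strongly regular graph with parameters (n, k, a, c), where 3 ≤ k and 1 ≤ c < k, and let e be an integer with e > a ≥ 0, c = e(e+1) and k = (e+1)c + e(e−a) (as integers). Then for any vertex v of X, the real number e is not an eigenvalue of the adjacency matrix of the subgraph of X induced on the closed neighbourhood N = {v} ∪ X₁(v), where X₁(v) is the set of neighbours of v. (Combined with the multiplicity count, N is a star complement for e in X.) -/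
/-- Decidability of adjacency in an induced subgraph. -/
instance induceAdjDecidable {V : Type*} (G : SimpleGraph V) [DecidableRel G.Adj]
    (s : Set V) : DecidableRel (G.induce s).Adj :=
  fun u v => inferInstanceAs (Decidable (G.Adj u v))

/-- For a strongly regular graph `X` with parameters `(n, k, a, c)`, `3 ≤ k`, `1 ≤ c < k`,
and positive eigenvalue `e > a ≥ 0` with `c = e(e+1)` and `k = (e+1)c + e(e−a)`, for any
vertex `v` the real number `e` is not an eigenvalue of the adjacency matrix of the subgraph
induced on the closed neighbourhood `N = {v} ∪ X₁(v)`; hence `N` is a star complement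
for `e` in `X`. -/
theorem srg_closed_neighbourhood_star_complement {V : Type*} [Fintype V] [DecidableEq V]
    (X : SimpleGraph V) [DecidableRel X.Adj]
    (n k a c : ℕ) (e : ℤ) (hX : X.IsSRGWith n k a c) (hk : 3 ≤ k) (hc : 1 ≤ c) (hck : c < k)
    (hea : (a : ℤ) < e) (hce : (c : ℤ) = e * (e + 1))
    (hke : (k : ℤ) = (e + 1) * (c : ℤ) + e * (e - (a : ℤ)))
    (v : V) :
    ¬ Module.End.HasEigenvalue
        (Matrix.toLin' ((X.induce ({v} ∪ X.neighborSet v)).adjMatrix ℝ)) (e : ℝ) := by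
  intro h
  obtain ⟨x, hx⟩ := h.exists_hasEigenvector
  have hxne : x ≠ 0 := hx.2
  have hxeq : ∀ w : ↥({v} ∪ X.neighborSet v),
      ∑ u ∈ (X.induce ({v} ∪ X.neighborSet v)).neighborFinset w, x u = (e : ℝ) * x w := by
    intro w
    have h1 := congrFun hx.apply_eq_smul w
    rw [Matrix.toLin'_apply, SimpleGraph.adjMatrix_mulVec_apply] at h1
    exact h1
  have he1 : 1 ≤ e := by omega
  have hvS : v ∈ ({v} ∪ X.neighborSet v : Set V) := Or.inl rfl
  set v0 : ↥({v} ∪ X.neighborSet v : Set V) := ⟨v, hvS⟩ with hv0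
  set N₁ : Finset ↥({v} ∪ X.neighborSet v : Set V) :=
    Finset.univ.filter (fun u => X.Adj v u.1) with hN₁
  have hmem : ∀ u : ↥({v} ∪ X.neighborSet v : Set V), u = v0 ∨ X.Adj v u.1 := by
    rintro ⟨u, hu | hu⟩
    · exact Or.inl (Subtype.ext hu)
    · exact Or.inr hu
  have hv0N : v0 ∉ N₁ := by simp [-Set.singleton_union, hN₁, Finset.mem_filter, hv0]
  have hnbr0 : (X.induce ({v} ∪ X.neighborSet v)).neighborFinset v0 = N₁ := by
    ext u
    simp [-Set.singleton_union, SimpleGraph.mem_neighborFinset, hN₁, Finset.mem_filter, hv0]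
  have hnbr : ∀ w : ↥({v} ∪ X.neighborSet v : Set V), X.Adj v w.1 →
      (X.induce ({v} ∪ X.neighborSet v)).neighborFinset w
        = insert v0 (N₁.filter (fun u => X.Adj w.1 u.1)) := by
    intro w hw
    ext u
    simp only [SimpleGraph.mem_neighborFinset, Finset.mem_insert, Finset.mem_filter,
      Finset.mem_univ, true_and, hN₁, SimpleGraph.comap_adj, Function.Embedding.coe_subtype]
    constructor
    · intro hadj
      rcases hmem u with rfl | hu
      · exact Or.inl rfl
      · exact Or.inr ⟨hu, hadj⟩
    · rintro (rfl | ⟨hu, hadj⟩)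
      · exact hw.symm
      · exact hadj
  -- cardinalities
  have card_N₁ : N₁.card = k := by
    rw [← hX.regular v, ← SimpleGraph.card_neighborFinset_eq_degree]
    apply Finset.card_bij (fun u _ => u.1)
    · intro u hu
      simpa using (Finset.mem_filter.mp hu).2
    · intro u _ u' _ h
      exact Subtype.ext h
    · intro z hz
      refine ⟨⟨z, Or.inr ?_⟩, ?_, rfl⟩
      · simpa using hz
      · simp [-Set.singleton_union, hN₁, Finset.mem_filter]
        simpa using hz
  have card_A : ∀ w : ↥({v} ∪ X.neighborSet v : Set V), X.Adj v w.1 → (N₁.filter (fun u => X.Adj w.1 u.1)).card = a := by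
    intro w hw
    rw [← hX.of_adj v w.1 hw, ← Set.toFinset_card]
    apply Finset.card_bij (fun u _ => u.1)
    · intro u hu
      simp only [Finset.mem_filter, hN₁, Finset.mem_univ, true_and] at hu
      simp [SimpleGraph.mem_commonNeighbors, hu.1, hu.2]
    · intro u _ u' _ h
      exact Subtype.ext h
    · intro z hz
      simp only [Set.mem_toFinset, SimpleGraph.mem_commonNeighbors] at hz
      refine ⟨⟨z, Or.inr hz.1⟩, ?_, rfl⟩
      simp [-Set.singleton_union, hN₁, Finset.mem_filter, hz.1, hz.2]
  -- eigen equations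
  have eq0 : ∑ u ∈ N₁, x u = (e : ℝ) * x v0 := by
    have h0 := hxeq v0
    rw [hnbr0] at h0
    exact h0
  have eqw : ∀ w ∈ N₁, x v0 + ∑ u ∈ N₁.filter (fun u => X.Adj w.1 u.1), x u
      = (e : ℝ) * x w := by
    intro w hw
    rw [hN₁, Finset.mem_filter] at hw
    have hv0A : v0 ∉ N₁.filter (fun u => X.Adj w.1 u.1) :=
      fun hm => hv0N (Finset.mem_filter.mp hm).1
    have h1 := hxeq w
    rw [hnbr w hw.2, Finset.sum_insert hv0A] at h1
    exact h1
  -- summing the equations over N₁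
  have key : (k : ℝ) * x v0 + (a : ℝ) * ((e : ℝ) * x v0) = (e : ℝ) * ((e : ℝ) * x v0) := by
    have hsum : ∑ w ∈ N₁, (x v0 + ∑ u ∈ N₁.filter (fun u => X.Adj w.1 u.1), x u)
        = ∑ w ∈ N₁, (e : ℝ) * x w := Finset.sum_congr rfl eqw
    rw [Finset.sum_add_distrib, Finset.sum_const, card_N₁, ← Finset.mul_sum, eq0] at hsum
    have hdouble : ∑ w ∈ N₁, ∑ u ∈ N₁.filter (fun u => X.Adj w.1 u.1), x u
        = (a : ℝ) * ∑ u ∈ N₁, x u := by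
      have h1 : ∀ w ∈ N₁, ∑ u ∈ N₁.filter (fun u => X.Adj w.1 u.1), x u
          = ∑ u ∈ N₁, if X.Adj w.1 u.1 then x u else 0 := fun w _ => Finset.sum_filter _ _
      rw [Finset.sum_congr rfl h1, Finset.sum_comm]
      have h2 : ∀ u ∈ N₁, (∑ w ∈ N₁, if X.Adj w.1 u.1 then x u else 0) = (a : ℝ) * x u := by
        intro u hu
        rw [← Finset.sum_filter, Finset.sum_const]
        have h3 : N₁.filter (fun w => X.Adj w.1 u.1) = N₁.filter (fun w => X.Adj u.1 w.1) := by
          ext w; simp [SimpleGraph.adj_comm]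
        rw [h3, card_A u (Finset.mem_filter.mp hu).2, nsmul_eq_mul]
      rw [Finset.sum_congr rfl h2, ← Finset.mul_sum]
    rw [hdouble, eq0] at hsum
    simpa [nsmul_eq_mul] using hsum
  -- from key: x v0 = 0
  have hxv0 : x v0 = 0 := by
    have hcoef : (k : ℝ) + (a : ℝ) * e - (e : ℝ) * e ≠ 0 := by
      have : ((k : ℤ) + a * e - e * e : ℤ) ≠ 0 := by nlinarith [hke, hce, he1, hea]
      have h4 : (((k : ℤ) + a * e - e * e : ℤ) : ℝ) ≠ 0 := Int.cast_ne_zero.mpr this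
      push_cast at h4
      convert h4 using 2 <;> push_cast <;> ring
    have : ((k : ℝ) + (a : ℝ) * e - (e : ℝ) * e) * x v0 = 0 := by linarith [key]
    rcases mul_eq_zero.mp this with h | h
    · exact absurd h hcoef
    · exact h
  -- maximum argument
  obtain ⟨w0, -, hw0max⟩ := Finset.exists_max_image (Finset.univ :
      Finset ↥({v} ∪ X.neighborSet v : Set V)) (fun u => |x u|) ⟨v0, Finset.mem_univ _⟩
  have hM : 0 < |x w0| := by
    obtain ⟨u, hu⟩ := Function.ne_iff.mp hxne
    have := hw0max u (Finset.mem_univ _)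
    have : 0 < |x u| := abs_pos.mpr hu
    linarith [hw0max u (Finset.mem_univ _)]
  have hw0v : X.Adj v w0.1 := by
    rcases hmem w0 with rfl | h
    · rw [hxv0] at hM; simp at hM
    · exact h
  have hw0N : w0 ∈ N₁ := Finset.mem_filter.mpr ⟨Finset.mem_univ _, hw0v⟩
  have heq := eqw w0 hw0N
  rw [hxv0, zero_add] at heq
  have hbound : |∑ u ∈ N₁.filter (fun u => X.Adj w0.1 u.1), x u| ≤ (a : ℝ) * |x w0| := by
    calc |∑ u ∈ N₁.filter (fun u => X.Adj w0.1 u.1), x u|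
        ≤ ∑ u ∈ N₁.filter (fun u => X.Adj w0.1 u.1), |x u| := Finset.abs_sum_le_sum_abs _ _
      _ ≤ (N₁.filter (fun u => X.Adj w0.1 u.1)).card • |x w0| :=
          Finset.sum_le_card_nsmul _ _ _ (fun u _ => hw0max u (Finset.mem_univ _))
      _ = (a : ℝ) * |x w0| := by rw [card_A w0 hw0v, nsmul_eq_mul]
  rw [heq, abs_mul] at hbound
  have hee : |(e : ℝ)| = (e : ℝ) :=
    abs_of_pos (by exact_mod_cast lt_of_lt_of_le zero_lt_one he1)
  rw [hee] at hbound
  have hle : (e : ℝ) ≤ (a : ℝ) := le_of_mul_le_mul_right hbound hM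
  have : (e : ℤ) ≤ (a : ℤ) := by exact_mod_cast hle
  omega
end

section
/- Let G be an a-regular finite simple graph on k vertices with real adjacency matrix A_G, and let Ĝ be the cone over G, i.e., the graph obtained by joining one new vertex to every vertex of G, with real adjacency matrix A_Ĝ. Then in ℝ[X] the characteristic polynomials satisfy (X − a)·charpoly(A_Ĝ) = (X² − aX − k)·charpoly(A_G). -/
/-- The cone over a graph `G`: one new vertex joined to every vertex of `G`. -/
def SimpleGraph.cone {V : Type*} (G : SimpleGraph V) : SimpleGraph (Option V) where
  Adj x y :=
    match x, y with
    | none, none => False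
    | none, some _ => True
    | some _, none => True
    | some u, some v => G.Adj u v
  symm := ⟨by rintro (_ | u) (_ | v) h <;> first | trivial | exact G.adj_symm h⟩
  loopless := ⟨by rintro (_ | u) h; exacts [h, G.irrefl h]⟩

instance {V : Type*} (G : SimpleGraph V) [DecidableRel G.Adj] :
    DecidableRel G.cone.Adj := fun x y =>
  match x, y with
  | none, none => isFalse id
  | none, some _ => isTrue trivial
  | some _, none => isTrue trivial
  | some u, some v => inferInstanceAs (Decidable (G.Adj u v))

open Polynomial in
/-- If `G` is an `a`-regular graph on `k` vertices and `Ĝ` is the cone over `G`, then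
`(X − a)·charpoly(A_Ĝ) = (X² − aX − k)·charpoly(A_G)` in `ℝ[X]`. -/
theorem cone_charpoly {V : Type*} [Fintype V] [DecidableEq V]
    (G : SimpleGraph V) [DecidableRel G.Adj] (a k : ℕ)
    (hcard : Fintype.card V = k) (hreg : G.IsRegularOfDegree a) :
    (X - C (a : ℝ)) * (G.cone.adjMatrix ℝ).charpoly
      = (X ^ 2 - C (a : ℝ) * X - C (k : ℝ)) * (G.adjMatrix ℝ).charpoly := by
  classical
  set M : Matrix (Option V) (Option V) ℝ[X] := Matrix.charmatrix (G.cone.adjMatrix ℝ) with hM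
  set c : Option V → ℝ[X] := fun i => Option.elim i (X - C (a:ℝ)) (fun _ => 1) with hc
  have hrowsum : ∀ u : V, ∑ v : V, (G.adjMatrix ℝ) u v = (a : ℝ) := by
    intro u
    have := G.adjMatrix_mulVec_const_apply (α := ℝ) (a := (1:ℝ)) (v := u)
    simpa [Matrix.mulVec, dotProduct, hreg u] using this
  have h2' : ∀ u v : V, M (some u) (some v) = Matrix.charmatrix (G.adjMatrix ℝ) u v := by
    intro u v
    simp only [hM, Matrix.charmatrix_apply, Matrix.diagonal_apply]
    have : (G.cone.adjMatrix ℝ) (some u) (some v) = (G.adjMatrix ℝ) u v := by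
      simp [SimpleGraph.adjMatrix, SimpleGraph.cone]
      exact if_congr Iff.rfl rfl rfl
    rw [this]
    congr 1
    simp only [Option.some.injEq]
  have h3 : ∀ u : V, ∑ v : V, Matrix.charmatrix (G.adjMatrix ℝ) u v = X - C (a:ℝ) := by
    intro u
    simp only [Matrix.charmatrix_apply, Matrix.diagonal_apply, Finset.sum_sub_distrib]
    rw [Finset.sum_ite_eq Finset.univ u (fun _ => (X : ℝ[X]))]
    rw [← map_sum, hrowsum u]
    simp
  have hg : ∀ i : Option V, (∑ j : Option V, c j • M i j) =
      Option.elim i (X ^ 2 - C (a:ℝ) * X - C (k:ℝ)) (fun _ => 0) := by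
    rintro (_ | u)
    · simp only [Fintype.sum_option, hc, Option.elim, one_smul, smul_eq_mul]
      have h1 : M none none = X := by
        simp [hM, Matrix.charmatrix_apply_eq, SimpleGraph.cone]
        exact if_neg (t := (1:ℝ)) id
      have h2 : ∀ v : V, M none (some v) = -1 := by
        intro v
        rw [hM, Matrix.charmatrix_apply_ne _ _ _ (by simp)]
        simp [SimpleGraph.cone, SimpleGraph.adjMatrix]
      simp only [h1, h2]
      rw [Finset.sum_const, Finset.card_univ, hcard]
      simp only [nsmul_eq_mul, mul_neg, mul_one, Polynomial.C_eq_natCast]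
      ring
    · simp only [Fintype.sum_option, hc, Option.elim, one_smul, smul_eq_mul]
      have h1 : M (some u) none = -1 := by
        rw [hM, Matrix.charmatrix_apply_ne _ _ _ (by simp)]
        simp [SimpleGraph.cone, SimpleGraph.adjMatrix]
      simp only [h1, h2' u, one_mul]
      linear_combination h3 u
  have hdet1 : (M.updateCol none fun i => ∑ j : Option V, c j • M i j).det
      = (X - C (a:ℝ)) * M.det := by
    have := Matrix.det_updateCol_sum M none c
    simpa [smul_eq_mul, hc] using this
  set P := M.updateCol none fun i => ∑ j : Option V, c j • M i j with hP
  have hdet2 : P.det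
      = (X ^ 2 - C (a:ℝ) * X - C (k:ℝ)) * (Matrix.charmatrix (G.adjMatrix ℝ)).det := by
    set e : (V ⊕ PUnit.{1}) ≃ Option V := (Equiv.optionEquivSumPUnit V).symm with he
    have hsub : P.submatrix e e = Matrix.fromBlocks (Matrix.charmatrix (G.adjMatrix ℝ)) 0
        (Matrix.of fun _ (v : V) => M none (some v))
        (Matrix.of fun _ _ => X ^ 2 - C (a:ℝ) * X - C (k:ℝ)) := by
      refine Matrix.ext fun i j => ?_
      rcases i with i | i <;> rcases j with j | j <;>
        simp only [Matrix.submatrix_apply, he, Equiv.optionEquivSumPUnit_symm_inl,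
          Equiv.optionEquivSumPUnit_symm_inr, Matrix.fromBlocks_apply₁₁,
          Matrix.fromBlocks_apply₁₂, Matrix.fromBlocks_apply₂₁, Matrix.fromBlocks_apply₂₂,
          Matrix.of_apply, Matrix.zero_apply]
      · rw [hP, Matrix.updateCol_apply, if_neg (by simp), h2']
      · rw [hP, Matrix.updateCol_apply, if_pos rfl, hg]; rfl
      · rw [hP, Matrix.updateCol_apply, if_neg (by simp)]
      · rw [hP, Matrix.updateCol_apply, if_pos rfl, hg]; rfl
    have hdet := Matrix.det_submatrix_equiv_self e P
    rw [hsub] at hdet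
    rw [← hdet, Matrix.det_fromBlocks_zero₁₂]
    have : (Matrix.of fun _ _ => X ^ 2 - C (a:ℝ) * X - C (k:ℝ) :
        Matrix PUnit.{1} PUnit.{1} ℝ[X]).det = X ^ 2 - C (a:ℝ) * X - C (k:ℝ) := Matrix.det_unique _
    rw [this, mul_comm]
  simp only [Matrix.charpoly]
  rw [← hM, ← hdet1]
  exact hdet2
end

section
/- Let p be a prime, m ≥ 1, q = p^m, and let F be a finite field of characteristic p with exactly q² elements. Then the number of 2×2 matrices M over F that are Hermitian (i.e., M_{ji} = (M_{ij})^q for all i, j), nonzero, and singular (det M = 0) is exactly (q − 1)(q² + 1). -/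
open Finset
theorem card_fixed (q : ℕ) (hq2 : 2 ≤ q)
    (F : Type*) [Field F] [Fintype F] [DecidableEq F]
    (hcard : Fintype.card F = q ^ 2) :
    (univ.filter (fun x : F => x ^ q = x)).card = q := by
  have hsq : 4 ≤ q ^ 2 := by nlinarith
  obtain ⟨g, hg⟩ := IsCyclic.exists_generator (α := Fˣ)
  have hord : orderOf g = q ^ 2 - 1 := by
    rw [orderOf_eq_card_of_forall_mem_zpowers hg, Nat.card_eq_fintype_card,
      Fintype.card_units, hcard]
  have hprim : IsPrimitiveRoot (g : F) (q ^ 2 - 1) := by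
    have h1 := IsPrimitiveRoot.orderOf g
    rw [hord] at h1
    exact IsPrimitiveRoot.coe_units_iff.mpr h1
  have hfac : q ^ 2 - 1 = (q + 1) * (q - 1) := by
    obtain ⟨k, rfl⟩ : ∃ k, q = k + 2 := ⟨q - 2, by omega⟩
    have h2 : (k + 2) ^ 2 = (k + 3) * (k + 1) + 1 := by ring
    have h3 : (k + 2 + 1) * (k + 2 - 1) = (k + 3) * (k + 1) := by norm_num
    rw [h2, h3, Nat.add_sub_cancel]
  have hprim' : IsPrimitiveRoot ((g : F) ^ (q + 1)) (q - 1) :=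
    hprim.pow (by omega) hfac
  have hq1 : 0 < q - 1 := by omega
  have key : univ.filter (fun x : F => x ^ q = x)
      = insert (0 : F) (Polynomial.nthRootsFinset (q - 1) (1 : F)) := by
    ext x
    simp only [mem_filter, mem_univ, true_and, mem_insert,
      Polynomial.mem_nthRootsFinset hq1 (1 : F)]
    constructor
    · intro h
      rcases eq_or_ne x 0 with rfl | hx
      · exact Or.inl rfl
      · right
        have : x ^ (q - 1) * x = 1 * x := by
          rw [one_mul, ← pow_succ, Nat.sub_add_cancel (by omega), h]
        exact mul_right_cancel₀ hx this
    · rintro (rfl | h)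
      · exact zero_pow (by omega)
      · calc x ^ q = x ^ (q - 1) * x := by rw [← pow_succ, Nat.sub_add_cancel (by omega)]
        _ = x := by rw [h, one_mul]
  rw [key, card_insert_of_notMem, hprim'.card_nthRootsFinset]
  · omega
  · intro h
    have h2 := (Polynomial.mem_nthRootsFinset hq1 (1 : F)).mp h
    rw [zero_pow (by omega : q - 1 ≠ 0)] at h2
    exact zero_ne_one h2

theorem pairs_ne (q : ℕ) (hq0 : q ≠ 0)
    (F : Type*) [Field F] [Fintype F] [DecidableEq F]
    (c : F) (hc : c ^ q = c) (hc0 : c ≠ 0) :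
    (univ.filter (fun x : F × F => x.1 ^ q = x.1 ∧ x.2 ^ q = x.2 ∧ x.1 * x.2 = c)).card
      = (univ.filter (fun x : F => x ^ q = x)).card - 1 := by
  rw [← card_erase_of_mem (by simp [hq0] : (0:F) ∈ univ.filter (fun x : F => x ^ q = x))]
  apply Finset.card_bij' (fun (x : F × F) _ => x.1) (fun a _ => (a, a⁻¹ * c))
  · rintro ⟨a, d⟩ hx
    simp only [mem_filter, mem_univ, true_and] at hx
    obtain ⟨ha, hd, hm⟩ := hx
    simp only [mem_erase, mem_filter, mem_univ, true_and]
    exact ⟨by rintro rfl; exact hc0 (by rw [← hm, zero_mul]), ha⟩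
  · intro a ha
    simp only [mem_erase, mem_filter, mem_univ, true_and] at ha
    obtain ⟨ha0, ha⟩ := ha
    simp only [mem_filter, mem_univ, true_and]
    refine ⟨ha, ?_, ?_⟩
    · rw [mul_pow, inv_pow, ha, hc]
    · field_simp
  · rintro ⟨a, d⟩ hx
    simp only [mem_filter, mem_univ, true_and] at hx
    obtain ⟨ha, hd, hm⟩ := hx
    have ha0 : a ≠ 0 := by rintro rfl; exact hc0 (by rw [← hm, zero_mul])
    have : a⁻¹ * c = d := by field_simp [← hm, mul_comm]; exact hm.symm
    simp [this]
  · intro a ha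
    rfl

theorem pairs_zero (q : ℕ) (hq0 : q ≠ 0)
    (F : Type*) [Field F] [Fintype F] [DecidableEq F] :
    (univ.filter (fun x : F × F => x.1 ^ q = x.1 ∧ x.2 ^ q = x.2 ∧ x.1 * x.2 = 0)).card
      = 2 * (univ.filter (fun x : F => x ^ q = x)).card - 1 := by
  set E := univ.filter (fun x : F => x ^ q = x) with hE
  have h0 : (0 : F) ∈ E := by simp [hE, hq0]
  have : univ.filter (fun x : F × F => x.1 ^ q = x.1 ∧ x.2 ^ q = x.2 ∧ x.1 * x.2 = 0)
      = ({0} ×ˢ E) ∪ (E ×ˢ {0}) := by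
    ext ⟨a, d⟩
    simp only [mem_filter, mem_univ, true_and, mem_union, mem_product, mem_singleton, hE,
      mem_filter]
    constructor
    · rintro ⟨ha, hd, hm⟩
      rcases mul_eq_zero.mp hm with rfl | rfl
      · exact Or.inl ⟨rfl, by simpa using hd⟩
      · exact Or.inr ⟨by simpa using ha, rfl⟩
    · rintro (⟨rfl, hd⟩ | ⟨ha, rfl⟩)
      · exact ⟨zero_pow hq0, by simpa using hd, zero_mul _⟩
      · exact ⟨by simpa using ha, zero_pow hq0, mul_zero _⟩
  rw [this, card_union, card_product, card_product, card_singleton, one_mul, mul_one]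
  have hinter : ({0} ×ˢ E) ∩ (E ×ˢ {0}) = {((0 : F), (0 : F))} := by
    ext ⟨a, d⟩
    simp only [mem_inter, mem_product, mem_singleton, Prod.mk.injEq]
    constructor
    · rintro ⟨⟨ha, -⟩, -, hd⟩; exact ⟨ha, hd⟩
    · rintro ⟨rfl, rfl⟩; exact ⟨⟨rfl, h0⟩, h0, rfl⟩
  rw [hinter, card_singleton]
  omega


/-- Over a finite field `F` with `q²` elements (`q = p^m`, `p = char F` prime), the number of
`2 × 2` Hermitian matrices (`M_{ji} = (M_{ij})^q` for all `i, j`) that are nonzero and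
singular is exactly `(q − 1)(q² + 1)`. -/
theorem card_nonzero_singular_hermitian (p m : ℕ) (hp : p.Prime) (hm : 1 ≤ m)
    (q : ℕ) (hq : q = p ^ m)
    (F : Type*) [Field F] [Fintype F] (hchar : CharP F p)
    (hcard : Fintype.card F = q ^ 2) :
    Set.ncard {M : Matrix (Fin 2) (Fin 2) F |
        (∀ i j, M j i = (M i j) ^ q) ∧ M ≠ 0 ∧ M.det = 0}
      = (q - 1) * (q ^ 2 + 1) := by
  classical
  have hq2 : 2 ≤ q := by
    rw [hq]
    calc 2 ≤ p := hp.two_le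
    _ = p ^ 1 := (pow_one p).symm
    _ ≤ p ^ m := Nat.pow_le_pow_right hp.pos hm
  have hq0 : q ≠ 0 := by omega
  have hFq : ∀ x : F, x ^ q ^ 2 = x := fun x => by
    rw [← hcard]; exact FiniteField.pow_card x
  have hNfix : ∀ b : F, (b ^ (q + 1)) ^ q = b ^ (q + 1) := by
    intro b
    rw [← pow_mul]
    have : (q + 1) * q = q ^ 2 + q := by ring
    rw [this, pow_add, hFq b, ← pow_succ']
  have hset : {M : Matrix (Fin 2) (Fin 2) F |
        (∀ i j, M j i = (M i j) ^ q) ∧ M ≠ 0 ∧ M.det = 0}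
      = ↑(univ.filter (fun M : Matrix (Fin 2) (Fin 2) F =>
          (∀ i j, M j i = (M i j) ^ q) ∧ M ≠ 0 ∧ M.det = 0)) := by
    ext M; simp
  rw [hset, Set.ncard_coe_finset]
  have hq1ne : q + 1 ≠ 0 := Nat.succ_ne_zero q
  have harith : (2 * q - 1) + (q ^ 2 - 1) * (q - 1) = (q - 1) * (q ^ 2 + 1) + 1 := by
    obtain ⟨k, rfl⟩ : ∃ k, q = k + 2 := ⟨q - 2, by omega⟩
    have h1 : (k + 2) ^ 2 - 1 = k ^ 2 + 4 * k + 3 := by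
      have h : (k + 2) ^ 2 = (k ^ 2 + 4 * k + 3) + 1 := by ring
      rw [h, Nat.add_sub_cancel]
    have h2 : 2 * (k + 2) - 1 = 2 * k + 3 := by omega
    have h3 : (k + 2) - 1 = k + 1 := by omega
    rw [h1, h2, h3]
    ring
  set T : Finset (F × F × F) := univ.filter
    (fun t => t.1 ^ q = t.1 ∧ t.2.2 ^ q = t.2.2 ∧ t.1 * t.2.2 = t.2.1 ^ (q + 1)) with hT
  have hbij : (univ.filter (fun M : Matrix (Fin 2) (Fin 2) F =>
      (∀ i j, M j i = (M i j) ^ q) ∧ M ≠ 0 ∧ M.det = 0)).card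
      = (T.erase (0, 0, 0)).card := by
    refine Finset.card_bij' (fun M _ => (M 0 0, M 0 1, M 1 1))
      (fun t _ => !![t.1, t.2.1; t.2.1 ^ q, t.2.2]) ?_ ?_ ?_ ?_
    · intro M hM
      simp only [mem_filter, mem_univ, true_and] at hM
      obtain ⟨hherm, hne, hdet⟩ := hM
      have h00 : M 0 0 ^ q = M 0 0 := (hherm 0 0).symm
      have h11 : M 1 1 ^ q = M 1 1 := (hherm 1 1).symm
      have h10 : M 1 0 = M 0 1 ^ q := hherm 0 1
      rw [Matrix.det_fin_two] at hdet
      simp only [mem_erase, hT, mem_filter, mem_univ, true_and]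
      refine ⟨?_, h00, h11, ?_⟩
      · intro h0
        apply hne
        have e1 : M 0 0 = 0 := congrArg Prod.fst h0
        have e2 : M 0 1 = 0 := congrArg (fun t => t.2.1) h0
        have e3 : M 1 1 = 0 := congrArg (fun t => t.2.2) h0
        ext i j
        fin_cases i <;> fin_cases j <;>
          simp [e1, e2, e3, h10, zero_pow hq0]
      · have h2 : M 0 1 * M 1 0 = M 0 1 ^ (q + 1) := by
          rw [h10, ← pow_succ']
        rw [← h2]
        exact sub_eq_zero.mp hdet
    · rintro ⟨a, b, d⟩ ht
      simp only [mem_erase, hT, mem_filter, mem_univ, true_and] at ht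
      obtain ⟨hne, ha, hd, hm'⟩ := ht
      simp only [mem_filter, mem_univ, true_and]
      refine ⟨?_, ?_, ?_⟩
      · intro i j
        fin_cases i <;> fin_cases j
        · simpa using ha.symm
        · simp
        · show b = (b ^ q) ^ q
          rw [← pow_mul, ← pow_two]
          exact (hFq b).symm
        · simpa using hd.symm
      · intro h0
        apply hne
        have e1 := congrFun (congrFun h0 0) 0
        have e2 := congrFun (congrFun h0 0) 1
        have e3 := congrFun (congrFun h0 1) 1
        simp at e1 e2 e3
        simp [e1, e2, e3]
      · rw [Matrix.det_fin_two]
        show a * d - b * b ^ q = 0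
        rw [hm', sub_eq_zero]
        exact pow_succ' b q
    · intro M hM
      simp only [mem_filter, mem_univ, true_and] at hM
      ext i j
      fin_cases i <;> fin_cases j <;> simp [(hM.1 0 1).symm]
    · rintro ⟨a, b, d⟩ ht
      simp
  have hE : (univ.filter (fun x : F => x ^ q = x)).card = q :=
    card_fixed q hq2 F hcard
  have hfiber : ∀ b : F, (T.filter (fun t => t.2.1 = b)).card
      = if b = 0 then 2 * q - 1 else q - 1 := by
    intro b
    have hb : (T.filter (fun t => t.2.1 = b)).card
        = (univ.filter (fun x : F × F =>
            x.1 ^ q = x.1 ∧ x.2 ^ q = x.2 ∧ x.1 * x.2 = b ^ (q + 1))).card := by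
      refine Finset.card_bij' (fun t _ => (t.1, t.2.2)) (fun x _ => (x.1, b, x.2))
        ?_ ?_ ?_ ?_
      · rintro ⟨a, b', d⟩ ht
        simp only [mem_filter, mem_univ, true_and, hT] at ht
        obtain ⟨⟨ha, hd, hm'⟩, rfl⟩ := ht
        simp only [mem_filter, mem_univ, true_and]
        exact ⟨ha, hd, hm'⟩
      · rintro ⟨a, d⟩ hx
        simp only [mem_filter, mem_univ, true_and] at hx
        simp only [mem_filter, mem_univ, true_and, hT]
        simp [hx.1, hx.2.1, hx.2.2]
      · rintro ⟨a, b', d⟩ ht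
        simp only [mem_filter, mem_univ, true_and, hT] at ht
        simp [ht.2]
      · rintro ⟨a, d⟩ _
        rfl
    rw [hb]
    by_cases hb0 : b = 0
    · subst hb0
      rw [if_pos rfl]
      have hz : (0 : F) ^ (q + 1) = 0 := zero_pow hq1ne
      simp only [hz]
      rw [pairs_zero q hq0 F, hE]
    · rw [if_neg hb0, pairs_ne q hq0 F _ (hNfix b) (pow_ne_zero _ hb0), hE]
  have h0T : ((0 : F), (0 : F), (0 : F)) ∈ T := by
    simp only [hT, mem_filter, mem_univ, true_and]
    exact ⟨zero_pow hq0, zero_pow hq0, by rw [zero_mul, zero_pow hq1ne]⟩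
  have hTtot : T.card = (q - 1) * (q ^ 2 + 1) + 1 := by
    rw [Finset.card_eq_sum_card_fiberwise
      (fun t _ => mem_univ t.2.1 : ∀ t ∈ T, t.2.1 ∈ univ)]
    rw [Finset.sum_congr rfl (fun b _ => hfiber b)]
    rw [← Finset.add_sum_erase _ _ (mem_univ (0 : F)), if_pos rfl]
    rw [Finset.sum_congr rfl (fun b hb => if_neg (Finset.mem_erase.mp hb).1)]
    rw [Finset.sum_const, smul_eq_mul, card_erase_of_mem (mem_univ _), card_univ, hcard]
    exact harith
  rw [hbij, card_erase_of_mem h0T, hTtot, Nat.add_sub_cancel]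
end

section
/- Let p be a prime, m ≥ 1, q = p^m, and let F be a finite field of characteristic p with exactly q² elements. Let M and M' be two distinct nonzero singular Hermitian 2×2 matrices over F (i.e., M_{ji} = (M_{ij})^q for all i, j, M ≠ 0, det M = 0, and likewise for M'). Then det(M − M') = 0 if and only if M' = α·M for some α ∈ F with α^q = α. (Consequently the subgraph induced on the nonzero singular Hermitian matrices in the Cayley graph consists of q² + 1 disjoint cliques of size q − 1, namely the sets {αM : α ≠ 0, α^q = α}.) -/
/-- Over a finite field `F` with `q²` elements (`q = p^m`, `p = char F` prime), if `M` and
`M'` are distinct nonzero singular `2 × 2` Hermitian matrices (`M_{ji} = (M_{ij})^q`), then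
`det(M − M') = 0` iff `M' = α • M` for some `α ∈ F` with `α^q = α`. -/
theorem singular_hermitian_adj_iff_smul (p m : ℕ) (hp : p.Prime) (hm : 1 ≤ m)
    (q : ℕ) (hq : q = p ^ m)
    (F : Type*) [Field F] [Fintype F] (hchar : CharP F p)
    (hcard : Fintype.card F = q ^ 2)
    (M M' : Matrix (Fin 2) (Fin 2) F)
    (hM : ∀ i j, M j i = (M i j) ^ q) (hM0 : M ≠ 0) (hMdet : M.det = 0)
    (hM' : ∀ i j, M' j i = (M' i j) ^ q) (hM'0 : M' ≠ 0) (hM'det : M'.det = 0)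
    (hne : M ≠ M') :
    (M - M').det = 0 ↔ ∃ α : F, α ^ q = α ∧ M' = α • M := by
  haveI : Fact p.Prime := ⟨hp⟩
  have hq0 : q ≠ 0 := by rw [hq]; exact pow_ne_zero _ hp.ne_zero
  have hfrob : ∀ x y : F, (x - y) ^ q = x ^ q - y ^ q := by
    intro x y; rw [hq]; exact sub_pow_char_pow x y m
  have ha : M 0 0 ^ q = M 0 0 := (hM 0 0).symm
  have hd : M 1 1 ^ q = M 1 1 := (hM 1 1).symm
  have hb : M 1 0 = M 0 1 ^ q := hM 0 1
  have ha' : M' 0 0 ^ q = M' 0 0 := (hM' 0 0).symm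
  have hd' : M' 1 1 ^ q = M' 1 1 := (hM' 1 1).symm
  have hb' : M' 1 0 = M' 0 1 ^ q := hM' 0 1
  rw [Matrix.det_fin_two] at hMdet hM'det ⊢
  simp only [Matrix.sub_apply]
  rw [hb] at hMdet ⊢
  rw [hb'] at hM'det ⊢
  set a := M 0 0 with haeq
  set b := M 0 1 with hbeq
  set d := M 1 1 with hdeq
  set a' := M' 0 0 with ha'eq
  set b' := M' 0 1 with hb'eq
  set d' := M' 1 1 with hd'eq
  constructor
  · intro h
    by_cases haz : a = 0
    · -- then b = 0, d ≠ 0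
      have hbz : b = 0 := by
        have hbb : b * b ^ q = 0 := by linear_combination -hMdet + d * haz
        rcases mul_eq_zero.1 hbb with h1 | h1
        · exact h1
        · exact pow_eq_zero_iff hq0 |>.1 h1
      rw [haz, hbz, zero_pow hq0] at h
      have hdz : d ≠ 0 := by
        intro hd0
        apply hM0
        have h10 : M 1 0 = 0 := by rw [hb, hbz, zero_pow hq0]
        ext i j
        fin_cases i <;> fin_cases j <;> simp only [Matrix.zero_apply]
        exacts [haz, hbz, h10, hd0]
      have ha'z : a' = 0 := by
        have h2 : a' * d = 0 := by linear_combination hM'det - h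
        exact (mul_eq_zero.1 h2).resolve_right hdz
      have hb'z : b' = 0 := by
        have hbb : b' * b' ^ q = 0 := by linear_combination -hM'det + d' * ha'z
        rcases mul_eq_zero.1 hbb with h1 | h1
        · exact h1
        · exact pow_eq_zero_iff hq0 |>.1 h1
      refine ⟨d' / d, by rw [div_pow, hd, hd'], ?_⟩
      have e00 : a' = d' / d * a := by rw [ha'z, haz, mul_zero]
      have e01 : b' = d' / d * b := by rw [hb'z, hbz, mul_zero]
      have e10 : b' ^ q = d' / d * b ^ q := by rw [hb'z, hbz, zero_pow hq0, mul_zero]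
      have e11 : d' = d' / d * d := by field_simp
      ext i j
      fin_cases i <;> fin_cases j <;> simp only [Matrix.smul_apply, smul_eq_mul]
      exacts [e00, e01, hb ▸ hb' ▸ e10, e11]
    · by_cases ha'z : a' = 0
      · exfalso
        have hb'z : b' = 0 := by
          have hbb : b' * b' ^ q = 0 := by linear_combination -hM'det + d' * ha'z
          rcases mul_eq_zero.1 hbb with h1 | h1
          · exact h1
          · exact pow_eq_zero_iff hq0 |>.1 h1
        rw [ha'z, hb'z, zero_pow hq0] at h
        have hd'z : d' = 0 := by
          have h2 : a * d' = 0 := by linear_combination hMdet - h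
          exact (mul_eq_zero.1 h2).resolve_left haz
        apply hM'0
        have h10 : M' 1 0 = 0 := by rw [hb', hb'z, zero_pow hq0]
        ext i j
        fin_cases i <;> fin_cases j <;> simp only [Matrix.zero_apply]
        exacts [ha'z, hb'z, h10, hd'z]
      · -- main case
        have key : (a * b' - b * a') * (a * b' ^ q - b ^ q * a') = 0 := by
          linear_combination (a - a') * a' * hMdet - (a - a') * a * hM'det - a * a' * h
        have habs : a * b' - b * a' = 0 := by
          rcases mul_eq_zero.1 key with h1 | h1
          · exact h1
          · have h2 : (a * b' - b * a') ^ q = 0 := by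
              rw [hfrob, mul_pow, mul_pow, ha, ha']; exact h1
            exact pow_eq_zero_iff hq0 |>.1 h2
        set α := a' / a with hαdef
        have hαq : α ^ q = α := by rw [hαdef, div_pow, ha, ha']
        have hα0 : α ≠ 0 := by rw [hαdef]; exact div_ne_zero ha'z haz
        have hαa : a' = α * a := by rw [hαdef, div_mul_cancel₀ a' haz]
        have hαb : b' = α * b := by
          rw [hαdef, div_mul_eq_mul_div, eq_div_iff haz]; linear_combination habs
        have hbq : b' ^ q = α * b ^ q := by rw [hαb, mul_pow, hαq]
        have hαd : d' = α * d := by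
          rw [hαa, hbq, hαb] at hM'det
          have h1 : (α * a) * d' = (α * a) * (α * d) := by
            linear_combination hM'det - α ^ 2 * hMdet
          exact mul_left_cancel₀ (mul_ne_zero hα0 haz) h1
        refine ⟨α, hαq, ?_⟩
        ext i j
        fin_cases i <;> fin_cases j <;> simp only [Matrix.smul_apply, smul_eq_mul]
        exacts [hαa, hαb, hb ▸ hb' ▸ hbq, hαd]
  · rintro ⟨α, hαq, hMM'⟩
    have e1 : a' = α * a := by rw [ha'eq, hMM']; simp; exact Or.inl rfl
    have e2 : b' = α * b := by rw [hb'eq, hMM']; simp; exact Or.inl rfl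
    have e3 : d' = α * d := by rw [hd'eq, hMM']; simp; exact Or.inl rfl
    have e4 : b' ^ q = α * b ^ q := by rw [e2, mul_pow, hαq]
    rw [e1, e4, e2, e3]
    linear_combination (1 - α) ^ 2 * hMdet
end
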